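/- Fix u, v ∈ (0,1) and 0 < s < t. Then the partial derivative of ψ(s,t;u,v) with respect to s exists and equals ∫₀ᵘ φ(h(w)) · ( (√t·Φ⁻¹(v) − √s·Φ⁻¹(w))/(2·(t−s)^{3/2}) − Φ⁻¹(w)/(2·√(s·(t−s))) ) dw, where h(w) = (√t·Φ⁻¹(v) − √s·Φ⁻¹(w))/√(t−s). -/

import Mathlib

open MeasureTheory Set Filter Topology

/-- Density of the standard normal distribution (φ). -/
noncomputable def stdNormalPDF (x : ℝ) : ℝ := (Real.sqrt (2 * Real.pi))⁻¹ * Real.exp (-x ^ 2 / 2)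

/-- Cumulative distribution function of the standard normal distribution (Φ). -/
noncomputable def stdNormalCDF (x : ℝ) : ℝ := ∫ t in Set.Iic x, stdNormalPDF t

/-- The standard normal quantile function (Φ⁻¹), the inverse of Φ on (0,1). -/
noncomputable def stdNormalCDFInv : ℝ → ℝ := Function.invFun stdNormalCDF

/-- The integrand of the Brownian-copula kernel; the `if` branches encode the
conventions Φ⁻¹(0) = -∞ (so Φ(·) = 0) and Φ⁻¹(1) = +∞ (so Φ(·) = 1). -/
noncomputable def psiIntegrand (s t v w : ℝ) : ℝ :=
  if v ≤ 0 then 0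
  else if 1 ≤ v then 1
  else stdNormalCDF ((Real.sqrt (max s t) * stdNormalCDFInv v -
      Real.sqrt (min s t) * stdNormalCDFInv w) / Real.sqrt |t - s|)

/-- The Brownian-copula kernel ψ(s,t;u,v). -/
noncomputable def psi (s t u v : ℝ) : ℝ :=
  if 0 < |t - s| then ∫ w in (0:ℝ)..u, psiIntegrand s t v w
  else if 0 < t then min u v
  else u * v

/-! ### Auxiliary facts about the standard normal distribution -/

lemma pdf_pos (x : ℝ) : 0 < stdNormalPDF x := by
  unfold stdNormalPDF
  positivity

lemma pdf_cont : Continuous stdNormalPDF := by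
  unfold stdNormalPDF
  continuity

lemma pdf_integrable : Integrable stdNormalPDF := by
  have h : Integrable (fun x : ℝ => Real.exp (-(1/2 : ℝ) * x ^ 2)) :=
    integrable_exp_neg_mul_sq (by norm_num)
  have : stdNormalPDF = fun x => (Real.sqrt (2 * Real.pi))⁻¹ * Real.exp (-(1/2 : ℝ) * x ^ 2) := by
    funext x; unfold stdNormalPDF; ring_nf
  rw [this]
  exact h.const_mul _

lemma integral_pdf : ∫ x, stdNormalPDF x = 1 := by
  have h2 : ∫ x : ℝ, Real.exp (-(1/2 : ℝ) * x ^ 2) = Real.sqrt (Real.pi / (1/2)) :=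
    integral_gaussian (1/2)
  have : ∫ x, stdNormalPDF x
      = (Real.sqrt (2 * Real.pi))⁻¹ * ∫ x : ℝ, Real.exp (-(1/2 : ℝ) * x ^ 2) := by
    rw [← integral_const_mul]
    congr 1; funext x; unfold stdNormalPDF; ring_nf
  rw [this, h2]
  rw [show Real.pi / (1/2) = 2 * Real.pi by ring]
  exact inv_mul_cancel₀ (by positivity)

lemma cdf_hasDerivAt (x : ℝ) : HasDerivAt stdNormalCDF (stdNormalPDF x) x := by
  have key : stdNormalCDF = fun y => stdNormalCDF 0 + ∫ τ in (0:ℝ)..y, stdNormalPDF τ := by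
    funext y
    rw [← intervalIntegral.integral_Iic_sub_Iic pdf_integrable.integrableOn
      pdf_integrable.integrableOn]
    unfold stdNormalCDF; ring
  rw [key]
  exact (intervalIntegral.integral_hasDerivAt_right
    (pdf_cont.intervalIntegrable _ _)
    (pdf_cont.stronglyMeasurableAtFilter _ _)
    pdf_cont.continuousAt).const_add _

lemma cdf_continuous : Continuous stdNormalCDF :=
  continuous_iff_continuousAt.2 fun x => (cdf_hasDerivAt x).continuousAt

lemma cdf_strictMono : StrictMono stdNormalCDF :=
  strictMono_of_deriv_pos (fun x => by rw [(cdf_hasDerivAt x).deriv]; exact pdf_pos x)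

lemma cdf_nonneg (x : ℝ) : 0 ≤ stdNormalCDF x :=
  setIntegral_nonneg measurableSet_Iic (fun y _ => (pdf_pos y).le)

lemma cdf_le_one (x : ℝ) : stdNormalCDF x ≤ 1 := by
  rw [← integral_pdf]
  exact setIntegral_le_integral pdf_integrable (Filter.Eventually.of_forall fun y => (pdf_pos y).le)

lemma cdf_tendsto_atBot : Tendsto stdNormalCDF atBot (𝓝 0) := by
  have : (0:ℝ) = ∫ x : ℝ, (0:ℝ) := by simp
  rw [this]
  have heq : ∀ n : ℝ, stdNormalCDF n = ∫ x, (Set.Iic n).indicator stdNormalPDF x := by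
    intro n; rw [integral_indicator measurableSet_Iic]; rfl
  refine Tendsto.congr (fun n => (heq n).symm) ?_
  refine tendsto_integral_filter_of_dominated_convergence stdNormalPDF
    (Filter.Eventually.of_forall fun n =>
      (pdf_cont.stronglyMeasurable.indicator measurableSet_Iic).aestronglyMeasurable)
    (Filter.Eventually.of_forall fun n => Filter.Eventually.of_forall fun a => ?_)
    pdf_integrable
    (Filter.Eventually.of_forall fun a => ?_)
  · rw [Real.norm_eq_abs]
    rcases le_or_gt a n with h | h
    · rw [Set.indicator_of_mem (Set.mem_Iic.mpr h)]
      exact le_of_eq (abs_of_nonneg (pdf_pos a).le)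
    · rw [Set.indicator_of_notMem (by simpa using h)]; simpa using (pdf_pos a).le
  · refine Tendsto.congr' ?_ tendsto_const_nhds
    filter_upwards [eventually_le_atBot (a - 1)] with n hn
    rw [Set.indicator_of_notMem]
    simp only [Set.mem_Iic, not_le]; linarith

lemma cdf_tendsto_atTop : Tendsto stdNormalCDF atTop (𝓝 1) := by
  rw [← integral_pdf]
  have heq : ∀ n : ℝ, stdNormalCDF n = ∫ x, (Set.Iic n).indicator stdNormalPDF x := by
    intro n; rw [integral_indicator measurableSet_Iic]; rfl
  refine Tendsto.congr (fun n => (heq n).symm) ?_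
  refine tendsto_integral_filter_of_dominated_convergence stdNormalPDF
    (Filter.Eventually.of_forall fun n =>
      (pdf_cont.stronglyMeasurable.indicator measurableSet_Iic).aestronglyMeasurable)
    (Filter.Eventually.of_forall fun n => Filter.Eventually.of_forall fun a => ?_)
    pdf_integrable
    (Filter.Eventually.of_forall fun a => ?_)
  · rw [Real.norm_eq_abs]
    rcases le_or_gt a n with h | h
    · rw [Set.indicator_of_mem (Set.mem_Iic.mpr h)]
      exact le_of_eq (abs_of_nonneg (pdf_pos a).le)
    · rw [Set.indicator_of_notMem (by simpa using h)]; simpa using (pdf_pos a).le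
  · refine Tendsto.congr' ?_ tendsto_const_nhds
    filter_upwards [eventually_ge_atTop a] with n hn
    rw [Set.indicator_of_mem (by simpa using hn)]

lemma cdf_surj {p : ℝ} (hp : p ∈ Set.Ioo (0:ℝ) 1) : ∃ x, stdNormalCDF x = p := by
  obtain ⟨a, ha⟩ := (cdf_tendsto_atBot.eventually_lt_const hp.1).exists
  obtain ⟨b, hb⟩ := (cdf_tendsto_atTop.eventually_const_lt hp.2).exists
  have hab : a ≤ b := by
    by_contra h
    exact absurd (cdf_strictMono.monotone (le_of_not_ge h)) (by push_neg; linarith)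
  obtain ⟨x, _, hx⟩ := intermediate_value_Icc hab cdf_continuous.continuousOn ⟨ha.le, hb.le⟩
  exact ⟨x, hx⟩

lemma cdf_invFun_eq {p : ℝ} (hp : p ∈ Set.Ioo (0:ℝ) 1) :
    stdNormalCDF (stdNormalCDFInv p) = p :=
  Function.invFun_eq (cdf_surj hp)

lemma invFun_continuousOn : ContinuousOn stdNormalCDFInv (Set.Ioo 0 1) := by
  intro p hp
  have hΦ : stdNormalCDF (stdNormalCDFInv p) = p := cdf_invFun_eq hp
  rw [ContinuousWithinAt]
  refine tendsto_order.2 ⟨fun a ha => ?_, fun b hb => ?_⟩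
  · have h1 : stdNormalCDF a < p := by rw [← hΦ]; exact cdf_strictMono ha
    filter_upwards [nhdsWithin_le_nhds (eventually_gt_nhds h1), self_mem_nhdsWithin] with q hq hq'
    by_contra h
    push_neg at h
    have := cdf_strictMono.monotone h
    rw [cdf_invFun_eq hq'] at this
    linarith
  · have h1 : p < stdNormalCDF b := by rw [← hΦ]; exact cdf_strictMono hb
    filter_upwards [nhdsWithin_le_nhds (eventually_lt_nhds h1), self_mem_nhdsWithin] with q hq hq'
    by_contra h
    push_neg at h
    have := cdf_strictMono.monotone h
    rw [cdf_invFun_eq hq'] at this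
    linarith

/-! ### Elementary bounds -/

lemma sqrt_two_pi_ge_one : (1:ℝ) ≤ Real.sqrt (2 * Real.pi) := by
  rw [show (1:ℝ) = Real.sqrt 1 by simp]
  exact Real.sqrt_le_sqrt (by nlinarith [Real.pi_gt_three])

lemma pdf_le_one (x : ℝ) : stdNormalPDF x ≤ 1 := by
  unfold stdNormalPDF
  have h1 : Real.exp (-x ^ 2 / 2) ≤ 1 := Real.exp_le_one_iff.mpr (by nlinarith [sq_nonneg x])
  have h2 : (Real.sqrt (2 * Real.pi))⁻¹ ≤ 1 := by
    rw [inv_le_one_iff₀]; right; exact sqrt_two_pi_ge_one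
  nlinarith [Real.exp_pos (-x^2/2), inv_nonneg.2 (Real.sqrt_nonneg (2*Real.pi))]

lemma pdf_mul_abs_le_one (x : ℝ) : stdNormalPDF x * |x| ≤ 1 := by
  unfold stdNormalPDF
  have h2 : (Real.sqrt (2 * Real.pi))⁻¹ ≤ 1 := by
    rw [inv_le_one_iff₀]; right; exact sqrt_two_pi_ge_one
  have key : |x| * Real.exp (-x ^ 2 / 2) ≤ 1 := by
    have h3 : |x| ≤ Real.exp (x ^ 2 / 2) := by
      have := Real.add_one_le_exp (x ^ 2 / 2)
      nlinarith [sq_nonneg (|x| - 1), sq_abs x]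
    have h4 : Real.exp (-x ^ 2 / 2) * Real.exp (x ^ 2 / 2) = 1 := by
      rw [← Real.exp_add]; ring_nf; exact Real.exp_zero
    nlinarith [Real.exp_pos (-x^2/2), abs_nonneg x]
  nlinarith [Real.exp_pos (-x^2/2), abs_nonneg x,
    inv_nonneg.2 (Real.sqrt_nonneg (2*Real.pi)),
    mul_nonneg (abs_nonneg x) (Real.exp_pos (-x^2/2)).le]

lemma key_bound (p q r b : ℝ) (hp : 0 < p) (hq : 0 < q) :
    stdNormalPDF ((r - p * b) / q) * (|(r - p * b) / q| + |b|) ≤ 1 + (|r| + q) / p := by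
  set g := (r - p * b) / q with hgdef
  have h0 : 0 ≤ stdNormalPDF g := (pdf_pos g).le
  have h1 : stdNormalPDF g * |g| ≤ 1 := pdf_mul_abs_le_one g
  have h2 : stdNormalPDF g ≤ 1 := pdf_le_one g
  have hb : p * |b| ≤ |r| + |g| * q := by
    have hgb : p * b = r - g * q := by rw [hgdef]; field_simp; ring
    calc p * |b| = |p * b| := by rw [abs_mul, abs_of_pos hp]
    _ = |r - g * q| := by rw [hgb]
    _ ≤ |r| + |g * q| := abs_sub _ _
    _ = |r| + |g| * q := by rw [abs_mul, abs_of_pos hq]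
  rw [← mul_le_mul_iff_right₀ hp]
  have hrhs : p * (1 + (|r| + q) / p) = p + |r| + q := by field_simp; ring
  rw [hrhs]
  nlinarith [mul_le_mul_of_nonneg_left hb h0, mul_le_mul_of_nonneg_left h1 hp.le,
    mul_le_mul_of_nonneg_right h2 (abs_nonneg r), mul_le_mul_of_nonneg_right h1 hq.le,
    abs_nonneg r, abs_nonneg g, abs_nonneg b]

/-! ### The inner derivative and its bound -/

lemma inner_hasDerivAt (t c x b : ℝ) (hx0 : 0 < x) (hxt : x < t) :
    HasDerivAt (fun σ => stdNormalCDF ((c - Real.sqrt σ * b) / Real.sqrt (t - σ)))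
      (stdNormalPDF ((c - Real.sqrt x * b) / Real.sqrt (t - x)) *
        ((c - Real.sqrt x * b) / (2 * Real.sqrt (t - x) ^ 3) -
          b / (2 * Real.sqrt (x * (t - x))))) x := by
  have htx : 0 < t - x := by linarith
  have hsx : (0:ℝ) < Real.sqrt x := Real.sqrt_pos.2 hx0
  have hstx : (0:ℝ) < Real.sqrt (t - x) := Real.sqrt_pos.2 htx
  have h1 : HasDerivAt (fun σ : ℝ => c - Real.sqrt σ * b) (-(1 / (2 * Real.sqrt x) * b)) x :=
    ((Real.hasDerivAt_sqrt (ne_of_gt hx0)).mul_const b).const_sub c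
  have h2 : HasDerivAt (fun σ : ℝ => Real.sqrt (t - σ)) (-(1 / (2 * Real.sqrt (t - x)))) x := by
    have hi : HasDerivAt (fun σ : ℝ => t - σ) (-1) x := (hasDerivAt_id x).const_sub t
    have := (Real.hasDerivAt_sqrt (ne_of_gt htx)).comp x hi
    exact this.congr_deriv (by ring)
  have h3 := h1.div h2 (ne_of_gt hstx)
  have h4 := (cdf_hasDerivAt ((c - Real.sqrt x * b) / Real.sqrt (t - x))).comp x h3
  refine h4.congr_deriv (Eq.symm ?_)
  have hsq : Real.sqrt (t - x) * Real.sqrt (t - x) = t - x := Real.mul_self_sqrt htx.le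
  have h5 : Real.sqrt (x * (t - x)) = Real.sqrt x * Real.sqrt (t - x) := Real.sqrt_mul hx0.le _
  rw [h5]
  congr 1
  field_simp
  ring

lemma inner_deriv_bound (t c x b : ℝ) (hx0 : 0 < x) (hxt : x < t) :
    ‖stdNormalPDF ((c - Real.sqrt x * b) / Real.sqrt (t - x)) *
      ((c - Real.sqrt x * b) / (2 * Real.sqrt (t - x) ^ 3) -
        b / (2 * Real.sqrt (x * (t - x))))‖ ≤
    ((t - x)⁻¹ + (Real.sqrt x * Real.sqrt (t - x))⁻¹) *
      (1 + (|c| + Real.sqrt (t - x)) / Real.sqrt x) := by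
  have htx : 0 < t - x := by linarith
  set p := Real.sqrt x with hpdef
  set q := Real.sqrt (t - x) with hqdef
  have hp : 0 < p := Real.sqrt_pos.2 hx0
  have hq : 0 < q := Real.sqrt_pos.2 htx
  have hq2 : q ^ 2 = t - x := Real.sq_sqrt htx.le
  set g := (c - p * b) / q with hgdef
  set G := stdNormalPDF g with hGdef
  have hG0 : 0 ≤ G := (pdf_pos g).le
  have hkey : G * (|g| + |b|) ≤ 1 + (|c| + q) / p := key_bound p q c b hp hq
  have habsA : |(c - p * b) / (2 * q ^ 3)| = |g| / (2 * (t - x)) := by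
    rw [abs_div, abs_of_pos (by positivity : (0:ℝ) < 2 * q ^ 3)]
    have h1 : |c - p * b| = |g| * q := by
      rw [hgdef, abs_div, abs_of_pos hq]; field_simp
    rw [h1, ← hq2]
    field_simp
  have habsB : |b / (2 * Real.sqrt (x * (t - x)))| = |b| / (2 * (p * q)) := by
    rw [Real.sqrt_mul hx0.le, ← hpdef, ← hqdef, abs_div,
      abs_of_pos (by positivity : (0:ℝ) < 2 * (p * q))]
  have hR0 : 0 ≤ 1 + (|c| + q) / p := by positivity
  have h1 : G * |g| ≤ 1 + (|c| + q) / p := by nlinarith [mul_nonneg hG0 (abs_nonneg b)]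
  have h2 : G * |b| ≤ 1 + (|c| + q) / p := by nlinarith [mul_nonneg hG0 (abs_nonneg g)]
  calc ‖G * ((c - p * b) / (2 * q ^ 3) - b / (2 * Real.sqrt (x * (t - x))))‖
      = G * |(c - p * b) / (2 * q ^ 3) - b / (2 * Real.sqrt (x * (t - x)))| := by
        rw [Real.norm_eq_abs, abs_mul, abs_of_nonneg hG0]
    _ ≤ G * (|(c - p * b) / (2 * q ^ 3)| + |b / (2 * Real.sqrt (x * (t - x)))|) := by
        gcongr
        exact abs_sub _ _
    _ = G * |g| / (2 * (t - x)) + G * |b| / (2 * (p * q)) := by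
        rw [habsA, habsB]; ring
    _ ≤ ((t - x)⁻¹ + (p * q)⁻¹) * (1 + (|c| + q) / p) := by
        have i1 : (0:ℝ) < (t - x)⁻¹ := by positivity
        have i2 : (0:ℝ) < (p * q)⁻¹ := by positivity
        have j1 : G * |g| * (t - x)⁻¹ ≤ (1 + (|c| + q) / p) * (t - x)⁻¹ :=
          mul_le_mul_of_nonneg_right h1 i1.le
        have j2 : G * |b| * (p * q)⁻¹ ≤ (1 + (|c| + q) / p) * (p * q)⁻¹ :=
          mul_le_mul_of_nonneg_right h2 i2.le
        have k1 : 0 ≤ (1 + (|c| + q) / p) * (t - x)⁻¹ := mul_nonneg hR0 i1.le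
        have k2 : 0 ≤ (1 + (|c| + q) / p) * (p * q)⁻¹ := mul_nonneg hR0 i2.le
        have e1 : G * |g| / (2 * (t - x)) = G * |g| * (t - x)⁻¹ / 2 := by
          rw [div_eq_mul_inv, mul_inv]; ring
        have e2 : G * |b| / (2 * (p * q)) = G * |b| * (p * q)⁻¹ / 2 := by
          rw [div_eq_mul_inv, mul_inv]; ring
        rw [e1, e2]
        linarith

/-- For u, v ∈ (0,1) and 0 < s < t, the partial derivative of ψ(s,t;u,v) with respect
to s exists and is given by the stated integral formula. -/
theorem psi_hasDerivAt_s (u v s t : ℝ) (hu : u ∈ Set.Ioo (0:ℝ) 1) (hv : v ∈ Set.Ioo (0:ℝ) 1)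
    (hs : 0 < s) (hst : s < t) :
    HasDerivAt (fun σ : ℝ => psi σ t u v)
      (∫ w in (0:ℝ)..u,
        stdNormalPDF ((Real.sqrt t * stdNormalCDFInv v - Real.sqrt s * stdNormalCDFInv w) /
            Real.sqrt (t - s)) *
          ((Real.sqrt t * stdNormalCDFInv v - Real.sqrt s * stdNormalCDFInv w) /
              (2 * Real.sqrt (t - s) ^ 3) -
            stdNormalCDFInv w / (2 * Real.sqrt (s * (t - s))))) s := by
  obtain ⟨hu0, hu1⟩ := hu
  obtain ⟨hv0, hv1⟩ := hv
  set c := Real.sqrt t * stdNormalCDFInv v with hc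
  set ε : ℝ := min (s/2) ((t-s)/2) with hεdef
  have hε_pos : 0 < ε := lt_min (by linarith) (by linarith)
  have hball : ∀ x ∈ Metric.ball s ε, s/2 < x ∧ x < t ∧ (t-s)/2 < t - x := by
    intro x hx
    rw [Metric.mem_ball, Real.dist_eq, abs_lt] at hx
    have e1 : ε ≤ s/2 := min_le_left _ _
    have e2 : ε ≤ (t-s)/2 := min_le_right _ _
    exact ⟨by linarith [hx.1], by linarith [hx.2], by linarith [hx.2]⟩
  have hsub : Set.Ioc (0:ℝ) u ⊆ Set.Ioo 0 1 := fun w hw => ⟨hw.1, lt_of_le_of_lt hw.2 hu1⟩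
  have hIcont : ContinuousOn stdNormalCDFInv (Set.Ioc 0 u) := invFun_continuousOn.mono hsub
  have hFeq : ∀ σ w, psiIntegrand σ t v w =
      stdNormalCDF ((Real.sqrt (max σ t) * stdNormalCDFInv v -
        Real.sqrt (min σ t) * stdNormalCDFInv w) / Real.sqrt |t - σ|) := by
    intro σ w
    unfold psiIntegrand
    rw [if_neg (not_le.mpr hv0), if_neg (not_le.mpr hv1)]
  have hFeq' : ∀ σ, 0 < σ → σ < t → ∀ w, psiIntegrand σ t v w =
      stdNormalCDF ((c - Real.sqrt σ * stdNormalCDFInv w) / Real.sqrt (t - σ)) := by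
    intro σ h0 h1 w
    rw [hFeq, max_eq_right h1.le, min_eq_left h1.le,
      abs_of_pos (by linarith : (0:ℝ) < t - σ)]
  set F' : ℝ → ℝ → ℝ := fun σ w =>
    stdNormalPDF ((c - Real.sqrt σ * stdNormalCDFInv w) / Real.sqrt (t - σ)) *
      ((c - Real.sqrt σ * stdNormalCDFInv w) / (2 * Real.sqrt (t - σ) ^ 3) -
        stdNormalCDFInv w / (2 * Real.sqrt (σ * (t - σ)))) with hF'def
  have hF_meas : ∀ σ : ℝ,
      AEStronglyMeasurable (fun w => psiIntegrand σ t v w) (volume.restrict (Set.Ioc 0 u)) := by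
    intro σ
    have hcont : ContinuousOn (fun w => psiIntegrand σ t v w) (Set.Ioc 0 u) := by
      refine ContinuousOn.congr ?_ (fun w _ => hFeq σ w)
      exact cdf_continuous.comp_continuousOn
        ((continuousOn_const.sub (continuousOn_const.mul hIcont)).div_const _)
    exact hcont.aestronglyMeasurable measurableSet_Ioc
  have hF'_meas : AEStronglyMeasurable (F' s) (volume.restrict (Set.Ioc 0 u)) := by
    have hcont : ContinuousOn (F' s) (Set.Ioc 0 u) := by
      refine ContinuousOn.mul ?_ ?_
      · exact pdf_cont.comp_continuousOn
          ((continuousOn_const.sub (continuousOn_const.mul hIcont)).div_const _)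
      · exact ((continuousOn_const.sub (continuousOn_const.mul hIcont)).div_const _).sub
          (hIcont.div_const _)
    exact hcont.aestronglyMeasurable measurableSet_Ioc
  have hconst_int : ∀ M : ℝ, Integrable (fun _ : ℝ => M) (volume.restrict (Set.Ioc 0 u)) :=
    fun M => integrableOn_const measure_Ioc_lt_top.ne
  have hF_int : Integrable (fun w => psiIntegrand s t v w) (volume.restrict (Set.Ioc 0 u)) := by
    refine Integrable.mono' (hconst_int 1) (hF_meas s) (Filter.Eventually.of_forall fun w => ?_)
    rw [Real.norm_eq_abs, hFeq, abs_of_nonneg (cdf_nonneg _)]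
    exact cdf_le_one _
  set M : ℝ := (((t-s)/2)⁻¹ + (Real.sqrt (s/2) * Real.sqrt ((t-s)/2))⁻¹) *
      (1 + (|c| + Real.sqrt t) / Real.sqrt (s/2)) with hMdef
  have h_bound : ∀ᵐ w ∂(volume.restrict (Set.Ioc 0 u)),
      ∀ x ∈ Metric.ball s ε, ‖F' x w‖ ≤ M := by
    refine Filter.Eventually.of_forall fun w x hx => ?_
    obtain ⟨hx1, hx2, hx3⟩ := hball x hx
    have hx0 : 0 < x := by linarith
    have htx : 0 < t - x := by linarith
    refine (inner_deriv_bound t c x (stdNormalCDFInv w) hx0 hx2).trans ?_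
    rw [hMdef]
    gcongr
    all_goals
      first
      | linarith
      | exact mul_pos (Real.sqrt_pos.2 (by linarith)) (Real.sqrt_pos.2 (by linarith))
      | exact add_nonneg (inv_nonneg.2 (by linarith))
          (inv_nonneg.2 (le_of_lt (mul_pos (Real.sqrt_pos.2 (by linarith))
            (Real.sqrt_pos.2 (by linarith)))))
  have h_diff : ∀ᵐ w ∂(volume.restrict (Set.Ioc 0 u)),
      ∀ x ∈ Metric.ball s ε, HasDerivAt (fun σ => psiIntegrand σ t v w) (F' x w) x := by
    refine Filter.Eventually.of_forall fun w x hx => ?_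
    obtain ⟨hx1, hx2, hx3⟩ := hball x hx
    have hx0 : 0 < x := by linarith
    have hd := inner_hasDerivAt t c x (stdNormalCDFInv w) hx0 hx2
    refine hd.congr_of_eventuallyEq ?_
    filter_upwards [Metric.isOpen_ball.mem_nhds hx] with σ hσ
    obtain ⟨hσ1, hσ2, _⟩ := hball σ hσ
    exact hFeq' σ (by linarith) hσ2 w
  have main := hasDerivAt_integral_of_dominated_loc_of_deriv_le (Metric.ball_mem_nhds s hε_pos)
    (Filter.Eventually.of_forall fun σ => hF_meas σ) hF_int hF'_meas h_bound (hconst_int M) h_diff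
  have key := main.2
  have hval : (∫ w, F' s w ∂(volume.restrict (Set.Ioc 0 u))) = ∫ w in (0:ℝ)..u, F' s w :=
    (intervalIntegral.integral_of_le hu0.le).symm
  rw [hval] at key
  refine key.congr_of_eventuallyEq ?_
  filter_upwards [Metric.ball_mem_nhds s hε_pos] with σ hσ
  obtain ⟨h1, h2, h3⟩ := hball σ hσ
  rw [psi, if_pos (by rw [abs_of_pos (by linarith : (0:ℝ) < t - σ)]; linarith),
    intervalIntegral.integral_of_le hu0.le]
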